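/- Monotonicity property: Let F̌ be a finite family of convex polytopes in ℝ^{d+1}, and for each nonzero y define F̌(y) = {P ∈ F̌ : x ⬝ y > 0 for all x ∈ P}. Let σ ⊆ τ be cells of the arrangement of the hyperplanes {v^⊥} (v ranging over vertices of the polytopes) on S^d, with σ contained in the closure of τ. Then for y ∈ relint(σ) and y' ∈ relint(τ), F̌(y) ⊆ F̌(y'). -/

import Mathlib

open RealInnerProductSpace

/-- **monotonicity property.** Let `(conv (V i))` be a finite family of
polytopes in `ℝ^{d+1}` with vertex sets `V i`.  Suppose `y` lies in (the relative
interior of) a face of the arrangement cell containing `y'`, expressed by the sign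
condition: for every vertex `v`, either `⟪v, y⟫ = 0` or `⟪v, y⟫` and `⟪v, y'⟫` are
both nonzero with the same sign.  Then `F̌(y) ⊆ F̌(y')`, i.e. every polytope strictly
on the positive side of `y^⊥` is strictly on the positive side of `y'^⊥`. -/
theorem side_family_monotone
    {d : ℕ} {ι : Type*} [Fintype ι] (V : ι → Finset (EuclideanSpace ℝ (Fin (d + 1))))
    (hVne : ∀ i, (V i).Nonempty)
    (y y' : EuclideanSpace ℝ (Fin (d + 1))) (hy : y ≠ 0) (hy' : y' ≠ 0)
    (hface : ∀ i, ∀ v ∈ V i, ⟪v, y⟫ = 0 ∨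
      (⟪v, y⟫ ≠ 0 ∧ ⟪v, y'⟫ ≠ 0 ∧ Real.sign ⟪v, y⟫ = Real.sign ⟪v, y'⟫)) :
    ∀ i, (∀ x ∈ convexHull ℝ (V i : Set (EuclideanSpace ℝ (Fin (d + 1)))), 0 < ⟪x, y⟫) →
      ∀ x ∈ convexHull ℝ (V i : Set (EuclideanSpace ℝ (Fin (d + 1)))), 0 < ⟪x, y'⟫ := by
  intro i hpos x hx
  have hsub : (V i : Set (EuclideanSpace ℝ (Fin (d + 1)))) ⊆ {x | 0 < ⟪x, y'⟫} := by
    intro v hv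
    have h1 : 0 < ⟪v, y⟫ := hpos v (subset_convexHull ℝ _ hv)
    rcases hface i v hv with h | ⟨h2, h3, h4⟩
    · exact absurd h h1.ne'
    · rw [Real.sign_of_pos h1] at h4
      rcases lt_trichotomy (⟪v, y'⟫) 0 with hl | hl | hl
      · rw [Real.sign_of_neg hl] at h4; norm_num at h4
      · exact absurd hl h3
      · exact hl
  have hconv : Convex ℝ {x : EuclideanSpace ℝ (Fin (d + 1)) | 0 < ⟪x, y'⟫} :=
    convex_halfSpace_gt ⟨fun a b => inner_add_left a b y', fun c a => real_inner_smul_left a y' c⟩ 0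
  exact convexHull_min hsub hconv hx
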